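/- Let u : P → Q be a Kummer homomorphism of saturated commutative monoids. Then the assignment (a, b) ↦ (a + b, b̄) descends to a well-defined group isomorphism from the pushout Q^gp ⊕_{P^gp} Q^gp onto Q^gp ⊕ (Q^gp/P^gp), and this isomorphism maps the saturated pushout Q ⊕_P^sat Q isomorphically (as a monoid) onto the submonoid Q ⊕ (Q^gp/P^gp) = {(q, g) : q ∈ Q, g ∈ Q^gp/P^gp} of Q^gp ⊕ (Q^gp/P^gp). -/

import Mathlib

/-- Let `u : P → Q` be a Kummer homomorphism of saturated commutative
monoids.  We realize the Grothendieck groups `P^gp`, `Q^gp` as abelian groups `GP`, `GQ`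
equipped with injective monoid embeddings `ιP : P →+ GP`, `ιQ : Q →+ GQ` such that every
element of the group is a difference of elements of the monoid; saturation is expressed
via these embeddings; `ugp : GP →+ GQ` is the induced map on group completions.  The
pushout `Q^gp ⊕_{P^gp} Q^gp` is `(GQ × GQ) ⧸ {(ugp x, -ugp x)}`, and the saturated pushout
`Q ⊕_P^sat Q` is the set of classes `ξ` with `m • ξ` in the image of `Q × Q` for some
`m > 0`.  Then `(a, b) ↦ (a + b, b̄)` descends to a well-defined group isomorphism
`GQ ⊕_{GP} GQ ≃+ GQ × (GQ ⧸ P^gp)`, mapping the saturated pushout onto the submonoid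
`{(q, g) : q ∈ Q, g ∈ Q^gp/P^gp}`. -/
theorem saturated_pushout_kummer_decomposition
    {P Q GP GQ : Type*} [AddCancelCommMonoid P] [AddCancelCommMonoid Q]
    [AddCommGroup GP] [AddCommGroup GQ]
    (ιP : P →+ GP) (ιQ : Q →+ GQ)
    (hιP : Function.Injective ιP) (hιQ : Function.Injective ιQ)
    (hgpP : ∀ g : GP, ∃ a b : P, g = ιP a - ιP b)
    (hgpQ : ∀ g : GQ, ∃ a b : Q, g = ιQ a - ιQ b)
    (hsatP : ∀ g : GP, ∀ n : ℕ, 0 < n → (∃ a : P, n • g = ιP a) → ∃ a : P, g = ιP a)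
    (hsatQ : ∀ g : GQ, ∀ n : ℕ, 0 < n → (∃ a : Q, n • g = ιQ a) → ∃ a : Q, g = ιQ a)
    (u : P →+ Q) (huinj : Function.Injective u)
    (hkummer : ∀ q : Q, ∃ n : ℕ, 0 < n ∧ ∃ x : P, n • q = u x)
    (ugp : GP →+ GQ) (hugp : ∀ x : P, ugp (ιP x) = ιQ (u x)) :
    ∃ e : ((GQ × GQ) ⧸ (ugp.prod (-ugp)).range) ≃+ GQ × (GQ ⧸ ugp.range),
      (∀ a b : GQ,
        e (QuotientAddGroup.mk' ((ugp.prod (-ugp)).range) (a, b)) =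
          (a + b, QuotientAddGroup.mk' ugp.range b)) ∧
      ⇑e '' {ξ : (GQ × GQ) ⧸ (ugp.prod (-ugp)).range |
          ∃ m : ℕ, 0 < m ∧ ∃ a b : Q,
            m • ξ = QuotientAddGroup.mk' ((ugp.prod (-ugp)).range) (ιQ a, ιQ b)} =
        {y : GQ × (GQ ⧸ ugp.range) | y.1 ∈ Set.range ιQ} := by
  
  classical
  set N : AddSubgroup (GQ × GQ) := (ugp.prod (-ugp)).range with hNdef
  set R : AddSubgroup GQ := ugp.range with hRdef
  let f : GQ × GQ →+ GQ × (GQ ⧸ R) :=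
    (AddMonoidHom.fst GQ GQ + AddMonoidHom.snd GQ GQ).prod
      ((QuotientAddGroup.mk' R).comp (AddMonoidHom.snd GQ GQ))
  have hf : ∀ p : GQ × GQ, f p = (p.1 + p.2, QuotientAddGroup.mk' R p.2) := fun p => rfl
  have hN : ∀ p ∈ N, f p = 0 := by
    rintro ⟨a, b⟩ ⟨x, hx⟩
    simp only [AddMonoidHom.prod_apply, AddMonoidHom.neg_apply, Prod.mk.injEq] at hx
    obtain ⟨hx1, hx2⟩ := hx
    rw [hf]
    refine Prod.ext ?_ ?_
    · simp [← hx1, ← hx2]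
    · show (QuotientAddGroup.mk' R) b = 0
      rw [QuotientAddGroup.mk'_apply, QuotientAddGroup.eq_zero_iff]
      exact ⟨-x, by simp [← hx2]⟩
  let F : (GQ × GQ) ⧸ N →+ GQ × (GQ ⧸ R) := QuotientAddGroup.lift N f hN
  have hFmk : ∀ p : GQ × GQ, F (QuotientAddGroup.mk' N p) = f p := fun p => rfl
  have hFinj : Function.Injective F := by
    rw [injective_iff_map_eq_zero]
    intro ξ hξ
    induction ξ using QuotientAddGroup.induction_on with
    | H p =>
      obtain ⟨a, b⟩ := p
      rw [show ((⟨a, b⟩ : GQ × GQ) : (GQ × GQ) ⧸ N) = QuotientAddGroup.mk' N (a, b) from rfl,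
        hFmk, hf, Prod.ext_iff] at hξ
      obtain ⟨h1, h2⟩ := hξ
      have h2' : b ∈ R := (QuotientAddGroup.eq_zero_iff b).mp h2
      obtain ⟨x, hx⟩ := h2'
      rw [show ((⟨a, b⟩ : GQ × GQ) : (GQ × GQ) ⧸ N) = QuotientAddGroup.mk' N (a, b) from rfl,
        QuotientAddGroup.mk'_apply, QuotientAddGroup.eq_zero_iff]
      have h1' : a + b = 0 := h1
      rw [← hx] at h1'
      have ha : a = -ugp x := eq_neg_of_add_eq_zero_left h1'
      refine ⟨-x, ?_⟩
      simp only [AddMonoidHom.prod_apply, AddMonoidHom.neg_apply, map_neg, neg_neg]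
      exact Prod.ext (by simp [ha]) (by simp [hx])
  have hFsurj : Function.Surjective F := by
    rintro ⟨c, g⟩
    induction g using QuotientAddGroup.induction_on with
    | H b =>
      refine ⟨QuotientAddGroup.mk' N (c - b, b), ?_⟩
      rw [hFmk, hf]
      simp
  let e : ((GQ × GQ) ⧸ N) ≃+ GQ × (GQ ⧸ R) := AddEquiv.ofBijective F ⟨hFinj, hFsurj⟩
  have he : ∀ a b : GQ, e (QuotientAddGroup.mk' N (a, b)) = (a + b, QuotientAddGroup.mk' R b) :=
    fun a b => hFmk (a, b)
  refine ⟨e, he, ?_⟩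
  ext y
  constructor
  · rintro ⟨ξ, ⟨m, hm, a, b, hmξ⟩, rfl⟩
    have h1 : e (m • ξ) = m • e ξ := e.toAddMonoidHom.map_nsmul m ξ
    rw [hmξ, he] at h1
    have h2 : m • (e ξ).1 = ιQ (a + b) := by
      have := congrArg Prod.fst h1
      simp only [Prod.smul_fst] at this
      rw [← this, map_add]
    obtain ⟨q, hq⟩ := hsatQ (e ξ).1 m hm ⟨a + b, h2⟩
    exact ⟨q, hq.symm⟩
  · rintro ⟨q, hq⟩
    obtain ⟨c, g⟩ := y
    simp only at hq
    induction g using QuotientAddGroup.induction_on with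
    | H b =>
      obtain ⟨s, t, hb⟩ := hgpQ b
      obtain ⟨n, hn, x, hx⟩ := hkummer t
      obtain ⟨r, hr, y', hy'⟩ := hkummer (n • s)
      refine ⟨QuotientAddGroup.mk' N (c - b, b),
        ⟨n * r, Nat.mul_pos hn hr, (n * r) • q, 0, ?_⟩, ?_⟩
      · rw [← map_nsmul, QuotientAddGroup.mk'_apply, QuotientAddGroup.mk'_apply,
          QuotientAddGroup.eq_iff_sub_mem]
        have h1 : (n : ℕ) • (ιQ t) = ugp (ιP x) := by rw [hugp, ← hx, map_nsmul]
        have h2 : (n * r) • (ιQ s) = ugp (ιP y') := by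
          rw [hugp, ← hy', map_nsmul, map_nsmul, mul_comm n r, mul_smul]
        have hmb : (n * r) • b = ugp (ιP y' - r • ιP x) := by
          rw [map_sub, map_nsmul, ← h1, ← h2, hb, smul_sub]
          congr 1
          rw [mul_comm n r, mul_smul]
        refine ⟨-(ιP y' - r • ιP x), ?_⟩
        simp only [AddMonoidHom.prod_apply, AddMonoidHom.neg_apply, map_neg, neg_neg,
          Prod.neg_mk, Prod.smul_mk, Prod.mk_sub_mk, Prod.mk.injEq]
        constructor
        · rw [← hmb, ← hq, map_nsmul, smul_sub]
          abel
        · rw [← hmb, map_zero, sub_zero]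
      · rw [he]
        exact Prod.ext (by simp) rfl
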